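/- Let x be an integer with |x| > 1 and b, c integers with c = 1 or c = -1 and b + c ≠ 0. Then there exists a positive integer m such that the congruence x^n ≡ b + c (mod m) has exactly the same solutions in non-negative integers n as the equation x^n = b + c. -/

import Mathlib

theorem skolem_one_term (x b c : ℤ) (hx : 1 < |x|) (hc : c = 1 ∨ c = -1)
    (hbc : b + c ≠ 0) :
    ∃ m : ℕ, 0 < m ∧ ∀ n : ℕ, ((m : ℤ) ∣ x ^ n - (b + c) ↔ x ^ n = b + c) := by
  set a : ℤ := b + c with ha
  have hx2 : (2 : ℤ) ≤ |x| := hx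
  set A : ℕ := a.natAbs with hA
  set N : ℕ := A + 1 with hN
  have habs : |a| = (A : ℤ) := Int.abs_eq_natAbs a
  have hAlt : (A : ℤ) < |x| ^ A := by
    calc (A : ℤ) < 2 ^ A := by exact_mod_cast Nat.lt_two_pow_self (n := A)
      _ ≤ |x| ^ A := pow_le_pow_left₀ (by norm_num) hx2 A
  have haltN : |a| < |x| ^ N := by
    rw [habs]
    calc (A : ℤ) < |x| ^ A := hAlt
      _ ≤ |x| ^ N := pow_le_pow_right₀ (by linarith) (Nat.le_succ A)
  have hxnat : (2 : ℕ) ≤ x.natAbs := by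
    have : ((x.natAbs : ℤ)) = |x| := (Int.abs_eq_natAbs x).symm
    omega
  have hmval : ((x.natAbs ^ N : ℕ) : ℤ) = |x| ^ N := by
    rw [Nat.cast_pow, ← Int.abs_eq_natAbs]
  refine ⟨x.natAbs ^ N, pow_pos (by omega) N, fun n => ?_⟩
  rw [hmval]
  constructor
  · intro hdvd
    by_contra hne
    have hne' : x ^ n - a ≠ 0 := sub_ne_zero.mpr hne
    rcases le_or_gt N n with hge | hlt
    · have h1 : |x| ^ N ∣ x ^ n := by
        have h2 : |x| ^ n ∣ x ^ n := by
          rw [← abs_pow]; exact (abs_dvd _ _).mpr dvd_rfl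
        exact (pow_dvd_pow _ hge).trans h2
      have hda : |x| ^ N ∣ |a| := (dvd_abs _ _).mpr (by
        have := dvd_sub h1 hdvd
        simpa using this)
      have := Int.le_of_dvd (abs_pos.mpr hbc) hda
      linarith
    · have hsize : |x ^ n - a| < |x| ^ N := by
        have h1 : |x ^ n - a| ≤ |x| ^ n + |a| := by
          calc |x ^ n - a| ≤ |x ^ n| + |a| := abs_sub _ _
            _ = |x| ^ n + |a| := by rw [abs_pow]
        have h2 : |x| ^ n ≤ |x| ^ A := pow_le_pow_right₀ (by linarith) (by omega)
        have h3 : |x| ^ N = |x| * |x| ^ A := by rw [hN, pow_succ]; ring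
        nlinarith [habs ▸ hAlt]
      have := Int.le_of_dvd (abs_pos.mpr hne') ((dvd_abs _ _).mpr hdvd)
      linarith
  · intro heq; rw [heq]; simp
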